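/- (Avoidance of countable products.) Let μ = supₙ μₙ be singular of cofinality ω with μₙ strictly increasing uncountable regular cardinals. Suppose Aₙ ⊆ [μₙ, μₙ₊₁) is countable for each n, and q is a normal condition in Q. Then there is a condition q' ≤ q in Q such that for every n ∈ a(q'), Aₙ ∩ (χ⁻_{q'}(n), χ⁺_{q'}(n)) = ∅. -/

import Mathlib

open Cardinal Set

noncomputable section

/-- Cardinality of a set of ordinals. -/
def scard (s : Set Ordinal.{0}) : Cardinal.{1} := Cardinal.mk s

/-- The set of accumulation points of a set of ordinals `p`:
ordinals `α` such that `p ∩ α` is nonempty and unbounded in `α`. -/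
def accSet (p : Set Ordinal.{0}) : Set Ordinal.{0} :=
  {α | (p ∩ Set.Iio α).Nonempty ∧ α = sSup (p ∩ Set.Iio α)}

/-- A set of ordinals is closed iff it contains all of its accumulation
points below its supremum. -/
def IsClosedCond (q : Set Ordinal.{0}) : Prop :=
  accSet q ∩ Set.Iio (sSup q) ⊆ q

/-- Order type of a set of ordinals. -/
def otp (s : Set Ordinal.{0}) : Ordinal.{1} :=
  Ordinal.type ((· < ·) : s → s → Prop)

/-- Membership in the poset `P`: subsets of `μ` of cardinality `μ`. -/
def InP (μ : Cardinal.{0}) (p : Set Ordinal.{0}) : Prop :=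
  p ⊆ Set.Iio μ.ord ∧ scard p = Cardinal.lift.{1,0} μ

/-- The almost-inclusion ordering: `p₁ ≤ p₂` iff `|p₁ \ p₂| < μ`. -/
def condLe (μ : Cardinal.{0}) (p₁ p₂ : Set Ordinal.{0}) : Prop :=
  scard (p₁ \ p₂) < Cardinal.lift.{1,0} μ

/-- Membership in the poset `Q`: closed subsets of `μ` of cardinality `μ`. -/
def InQ (μ : Cardinal.{0}) (q : Set Ordinal.{0}) : Prop :=
  InP μ q ∧ IsClosedCond q

/-- The interval `[μₙ, μₙ₊₁)`. -/
def interval (μseq : ℕ → Cardinal.{0}) (n : ℕ) : Set Ordinal.{0} :=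
  Set.Ico ((μseq n).ord) ((μseq (n+1)).ord)

/-- `a(q) = {n : q ∩ [μₙ, μₙ₊₁) ≠ ∅}`. -/
def aSet (μseq : ℕ → Cardinal.{0}) (q : Set Ordinal.{0}) : Set ℕ :=
  {n | (q ∩ interval μseq n).Nonempty}

/-- Normality: letting `⟨mₙ⟩` enumerate `a(q)` increasingly,
`otp (q ∩ [μ_{mₙ}, μ_{mₙ+1})) = μₙ + 1`. -/
def IsNormalCond (μseq : ℕ → Cardinal.{0}) (q : Set Ordinal.{0}) : Prop :=
  ∃ m : ℕ → ℕ, StrictMono m ∧ Set.range m = aSet μseq q ∧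
    ∀ n, otp (q ∩ interval μseq (m n)) = Ordinal.lift.{1,0} ((μseq n).ord + 1)

/-- `χ⁺_q(n) = sup (q ∩ [μₙ, μₙ₊₁))`. -/
def chiP (μseq : ℕ → Cardinal.{0}) (q : Set Ordinal.{0}) (n : ℕ) : Ordinal.{0} :=
  sSup (q ∩ interval μseq n)

/-- `χ⁻_q(n) = min (q ∩ [μₙ, μₙ₊₁))`. -/
def chiM (μseq : ℕ → Cardinal.{0}) (q : Set Ordinal.{0}) (n : ℕ) : Ordinal.{0} :=
  sInf (q ∩ interval μseq n)

/-- `μₙ` is a strictly increasing sequence of regular cardinals with supremum `μ`. -/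
def GoodSeq (μ : Cardinal.{0}) (μseq : ℕ → Cardinal.{0}) : Prop :=
  StrictMono μseq ∧ (∀ n, (μseq n).IsRegular) ∧ μ = ⨆ n, μseq n

lemma otp_Iio (o : Ordinal.{0}) : otp (Set.Iio o) = Ordinal.lift.{1,0} o :=
  Ordinal.typein_ordinal o

lemma orderIso_of_otp_eq {s : Set Ordinal.{0}} {o : Ordinal.{0}}
    (h : otp s = Ordinal.lift.{1,0} o) : Nonempty (s ≃o Set.Iio o) := by
  rw [← otp_Iio] at h
  obtain ⟨f⟩ := Ordinal.type_eq.mp h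
  exact ⟨OrderIso.ofRelIsoLT f⟩

lemma isRegular_lift {c : Cardinal.{0}} (hc : c.IsRegular) :
    (Cardinal.lift.{1,0} c).IsRegular := by
  constructor
  · simpa using Cardinal.lift_le.{1}.mpr hc.1
  · rw [← Cardinal.lift_ord, ← Ordinal.lift_cof]
    exact Cardinal.lift_le.mpr hc.2

lemma block_lemma {q : Set Ordinal.{0}} (hbdd : BddAbove q) (hcl : IsClosedCond q)
    {l u : Ordinal.{0}} {ν : Cardinal.{0}} (hνr : ν.IsRegular) (hνu : Cardinal.aleph0 < ν)
    (hl : 0 < l)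
    (h : otp (q ∩ Set.Ico l u) = Ordinal.lift.{1,0} (ν.ord + 1))
    (B : Set Ordinal.{0}) (hB : B.Countable) :
    ∃ t s : Ordinal.{0}, t ∈ q ∩ Set.Ico l u ∧ s < t ∧
      (∀ x ∈ q ∩ Set.Ico l u, x ≤ t) ∧
      (∀ b ∈ B, b < t → b ≤ s) ∧
      scard (q ∩ Set.Ico l u ∩ Set.Ioi s) = Cardinal.lift.{1,0} ν := by
  set T := q ∩ Set.Ico l u with hTdef
  obtain ⟨e⟩ := orderIso_of_otp_eq h
  have hν0 : Cardinal.aleph0 ≤ ν := hνr.1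
  have hlim : Order.IsSuccLimit ν.ord := Cardinal.isSuccLimit_ord hν0
  have hνordpos : (0:Ordinal) < ν.ord := hlim.pos
  have htoplt : ν.ord < ν.ord + 1 := by
    rw [Ordinal.add_one_eq_succ]; exact Order.lt_succ _
  set top : ↥(Set.Iio (ν.ord+1)) := ⟨ν.ord, htoplt⟩ with htopdef
  set t : Ordinal := ((e.symm top : ↥T) : Ordinal) with htdef
  have htT : t ∈ T := (e.symm top).2
  have hmax : ∀ x ∈ T, x ≤ t := by
    intro x hx
    have h2 : ((e ⟨x, hx⟩ : ↥(Set.Iio (ν.ord+1))) : Ordinal) ≤ ν.ord := by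
      rw [← Order.lt_succ_iff, ← Ordinal.add_one_eq_succ]
      exact (e ⟨x, hx⟩).2
    have h1 : e ⟨x, hx⟩ ≤ top := Subtype.coe_le_coe.mp h2
    have h4 := e.symm.monotone h1
    rw [OrderIso.symm_apply_apply] at h4
    exact Subtype.coe_le_coe.mpr h4
  have hlt_t : ∀ (x : ↥T), (x : Ordinal) < t ↔ e x < top := by
    intro x
    constructor
    · intro hx
      have : x < e.symm top := Subtype.coe_lt_coe.mp hx
      have := e.strictMono this
      rwa [OrderIso.apply_symm_apply] at this
    · intro hx
      have := e.symm.strictMono hx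
      rw [OrderIso.symm_apply_apply] at this
      exact Subtype.coe_lt_coe.mpr this
  -- cofinality of t in T
  have hcof : ∀ a, a < t → ∃ x, x ∈ T ∧ a < x ∧ x < t := by
    by_contra hcon
    push_neg at hcon
    obtain ⟨a, hat, ha⟩ := hcon
    set D := T ∩ Set.Iio t with hDdef
    have hbot : (0:Ordinal) < ν.ord + 1 := hνordpos.trans htoplt
    have hx₀t : ((e.symm ⟨0, hbot⟩ : ↥T) : Ordinal) < t :=
      (hlt_t _).mpr (by rw [OrderIso.apply_symm_apply]; exact Subtype.mk_lt_mk.mpr hνordpos)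
    have hDne : D.Nonempty := ⟨_, (e.symm ⟨0, hbot⟩).2, hx₀t⟩
    have hnomax : ∀ x ∈ D, ∃ y ∈ D, x < y := by
      rintro x ⟨hxT, hxt⟩
      have hlt : e ⟨x, hxT⟩ < top := (hlt_t ⟨x, hxT⟩).mp hxt
      have hcoe : ((e ⟨x, hxT⟩ : ↥(Set.Iio (ν.ord+1))) : Ordinal) < ν.ord := hlt
      have hyv : ((e ⟨x, hxT⟩ : ↥(Set.Iio (ν.ord+1))) : Ordinal) + 1 < ν.ord := by
        rw [Ordinal.add_one_eq_succ]; exact hlim.succ_lt hcoe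
      set z : ↥(Set.Iio (ν.ord+1)) := ⟨_, hyv.trans htoplt⟩ with hzdef
      refine ⟨(e.symm z : ↥T), ⟨(e.symm z).2, ?_⟩, ?_⟩
      · exact (hlt_t _).mpr (by rw [OrderIso.apply_symm_apply]; exact Subtype.mk_lt_mk.mpr hyv)
      · have : e ⟨x, hxT⟩ < z := Subtype.mk_lt_mk.mpr (by
          simpa using (Order.lt_succ _).trans_eq (Ordinal.add_one_eq_succ _).symm)
        have := e.symm.strictMono this
        rw [OrderIso.symm_apply_apply] at this
        exact Subtype.coe_lt_coe.mpr this
    set u₀ := sSup D with hu₀def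
    have hDbdd : BddAbove D := ⟨t, fun x hx => le_of_lt hx.2⟩
    have hu₀a : u₀ ≤ a := csSup_le hDne (by
      rintro x ⟨hxT, hxt⟩
      by_contra hc
      push_neg at hc
      exact absurd (ha x hxT hc) (not_le.mpr hxt))
    have hu₀t : u₀ < t := lt_of_le_of_lt hu₀a hat
    have hu₀nD : u₀ ∉ D := by
      intro hmem
      obtain ⟨y, hyD, hy⟩ := hnomax u₀ hmem
      exact absurd (le_csSup hDbdd hyD) (not_le.mpr hy)
    have hDsub : D ⊆ q ∩ Set.Iio u₀ := by
      intro x hx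
      refine ⟨hx.1.1, ?_⟩
      rcases lt_or_eq_of_le (le_csSup hDbdd hx) with h' | h'
      · exact h'
      · exact absurd (show u₀ ∈ D from hu₀def ▸ h' ▸ hx) hu₀nD
    obtain ⟨w, hw⟩ := id hDne
    have hu₀acc : u₀ ∈ accSet q := by
      refine ⟨⟨w, hDsub hw⟩, le_antisymm ?_ ?_⟩
      · exact csSup_le hDne fun x hx =>
          le_csSup ⟨u₀, fun y hy => le_of_lt hy.2⟩ (hDsub hx)
      · exact csSup_le ⟨w, hDsub hw⟩ fun x hx => le_of_lt hx.2
    have hu₀q : u₀ ∈ q := hcl ⟨hu₀acc, lt_of_lt_of_le hu₀t (le_csSup hbdd htT.1)⟩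
    have hlu₀ : l ≤ u₀ := le_trans hw.1.2.1 (le_csSup hDbdd hw)
    exact hu₀nD ⟨⟨hu₀q, hlu₀, hu₀t.trans htT.2.2⟩, hu₀t⟩
  -- small initial segments
  have hsmall : ∀ a, a < t → scard (T ∩ Set.Iic a) < Cardinal.lift.{1,0} ν := by
    intro a hat
    obtain ⟨x₀, hx₀T, hax₀, hx₀t⟩ := hcof a hat
    have hx₀top : e ⟨x₀, hx₀T⟩ < top := (hlt_t ⟨x₀, hx₀T⟩).mp hx₀t
    set y₀ : Ordinal := ((e ⟨x₀, hx₀T⟩ : ↥(Set.Iio (ν.ord+1))) : Ordinal) with hy₀def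
    have hy₀ : y₀ < ν.ord := hx₀top
    have hinj : Function.Injective (fun x : ↥(T ∩ Set.Iic a) =>
        (⟨((e ⟨x.1, x.2.1⟩ : ↥(Set.Iio (ν.ord+1))) : Ordinal), by
          have : (⟨x.1, x.2.1⟩ : ↥T) < ⟨x₀, hx₀T⟩ :=
            Subtype.mk_lt_mk.mpr (lt_of_le_of_lt x.2.2 hax₀)
          exact Subtype.coe_lt_coe.mpr (e.strictMono this)⟩ : ↥(Set.Iio y₀))) := by
      intro x y hxy
      have h1 := congrArg (fun z : ↥(Set.Iio y₀) => z.1) hxy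
      have h2 : (⟨x.1, x.2.1⟩ : ↥T) = ⟨y.1, y.2.1⟩ := e.injective (Subtype.ext h1)
      exact Subtype.ext (congrArg (fun z : ↥T => z.1) h2)
    calc scard (T ∩ Set.Iic a) ≤ #(Set.Iio y₀) := Cardinal.mk_le_of_injective hinj
      _ = Cardinal.lift.{1,0} y₀.card := Ordinal.mk_Iio_ordinal y₀
      _ < Cardinal.lift.{1,0} ν := Cardinal.lift_lt.mpr (Cardinal.lt_ord.mp hy₀)
  -- card of T ∩ Iio t
  have hDcard : scard (T ∩ Set.Iio t) = Cardinal.lift.{1,0} ν := by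
    apply le_antisymm
    · have hinj : Function.Injective (fun x : ↥(T ∩ Set.Iio t) =>
          (⟨((e ⟨x.1, x.2.1⟩ : ↥(Set.Iio (ν.ord+1))) : Ordinal),
            ((hlt_t ⟨x.1, x.2.1⟩).mp x.2.2 : _)⟩ : ↥(Set.Iio ν.ord))) := by
        intro x y hxy
        have h1 := congrArg (fun z : ↥(Set.Iio ν.ord) => z.1) hxy
        have h2 : (⟨x.1, x.2.1⟩ : ↥T) = ⟨y.1, y.2.1⟩ := e.injective (Subtype.ext h1)
        exact Subtype.ext (congrArg (fun z : ↥T => z.1) h2)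
      calc scard (T ∩ Set.Iio t) ≤ #(Set.Iio ν.ord) := Cardinal.mk_le_of_injective hinj
        _ = Cardinal.lift.{1,0} (ν.ord.card) := Ordinal.mk_Iio_ordinal _
        _ = Cardinal.lift.{1,0} ν := by rw [Cardinal.card_ord]
    · have hinj : Function.Injective (fun y : ↥(Set.Iio ν.ord) =>
          (⟨((e.symm ⟨y.1, y.2.trans htoplt⟩ : ↥T) : Ordinal),
            (e.symm ⟨y.1, y.2.trans htoplt⟩).2,
            (hlt_t _).mpr (by rw [OrderIso.apply_symm_apply]; exact Subtype.mk_lt_mk.mpr y.2)⟩ : ↥(T ∩ Set.Iio t))) := by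
        intro x y hxy
        have h1 := congrArg (fun z : ↥(T ∩ Set.Iio t) => z.1) hxy
        have h2 : (⟨x.1, x.2.trans htoplt⟩ : ↥(Set.Iio (ν.ord+1)))
            = ⟨y.1, y.2.trans htoplt⟩ := e.symm.injective (Subtype.ext h1)
        exact Subtype.ext (congrArg (fun z : ↥(Set.Iio (ν.ord+1)) => z.1) h2)
      calc Cardinal.lift.{1,0} ν = Cardinal.lift.{1,0} (ν.ord.card) := by rw [Cardinal.card_ord]
        _ = #(Set.Iio ν.ord) := (Ordinal.mk_Iio_ordinal _).symm
        _ ≤ scard (T ∩ Set.Iio t) := Cardinal.mk_le_of_injective hinj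
  have haleph : Cardinal.aleph0 ≤ Cardinal.lift.{1,0} ν := by
    simpa using Cardinal.lift_le.{1,0}.mpr hν0
  have hTcard : scard T ≤ Cardinal.lift.{1,0} ν := by
    have hsub : T ⊆ insert t (T ∩ Set.Iio t) := by
      intro x hx
      rcases lt_or_eq_of_le (hmax x hx) with h' | h'
      · exact Set.mem_insert_of_mem _ ⟨hx, h'⟩
      · exact h' ▸ Set.mem_insert _ _
    calc scard T ≤ #(insert t (T ∩ Set.Iio t) : Set Ordinal) := Cardinal.mk_le_mk_of_subset hsub
      _ ≤ scard (T ∩ Set.Iio t) + 1 := Cardinal.mk_insert_le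
      _ = Cardinal.lift.{1,0} ν + 1 := by rw [hDcard]
      _ = Cardinal.lift.{1,0} ν := Cardinal.add_one_eq haleph
  -- the sup of B below t
  set s := sSup (B ∩ Set.Iio t) with hsdef
  have hub : ∀ b ∈ B ∩ Set.Iio t, b ≤ t := fun b hb => le_of_lt hb.2
  have hslt : s < t := by
    rcases (B ∩ Set.Iio t).eq_empty_or_nonempty with he | hne
    · rw [hsdef, he, csSup_empty]
      exact lt_of_lt_of_le hl htT.2.1
    · rcases lt_or_eq_of_le (csSup_le hne hub) with h' | h'
      · exact h'
      · exfalso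
        have hcover : (T ∩ Set.Iio t) ⊆ ⋃ (b : ↥(B ∩ Set.Iio t)), (T ∩ Set.Iic b.1) := by
          rintro x ⟨hxT, hxt⟩
          have hxs : x < sSup (B ∩ Set.Iio t) := lt_of_lt_of_eq hxt h'.symm
          obtain ⟨b, hb, hxb⟩ := exists_lt_of_lt_csSup hne hxs
          exact Set.mem_iUnion.mpr ⟨⟨b, hb⟩, hxT, le_of_lt hxb⟩
        have h1 : Cardinal.lift.{1,0} ν ≤
            Cardinal.sum (fun b : ↥(B ∩ Set.Iio t) => #(T ∩ Set.Iic b.1 : Set Ordinal)) :=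
          hDcard ▸ (Cardinal.mk_le_mk_of_subset hcover).trans Cardinal.mk_iUnion_le_sum_mk
        have hcnt : #(↥(B ∩ Set.Iio t)) < Cardinal.lift.{1,0} ν := by
          have : #(↥(B ∩ Set.Iio t)) ≤ Cardinal.aleph0 := by
            rw [Cardinal.mk_le_aleph0_iff, Set.countable_coe_iff]
            exact hB.mono Set.inter_subset_left
          have h9 : Cardinal.lift.{1,0} Cardinal.aleph0 < Cardinal.lift.{1,0} ν :=
            Cardinal.lift_lt.mpr hνu
          exact this.trans_lt (by simpa using h9)
        have h2 := Cardinal.sum_lt_of_isRegular (isRegular_lift hνr) hcnt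
          (fun b => hsmall b.1 b.2.2)
        exact absurd (h1.trans_lt h2) (lt_irrefl _)
  have hBs : ∀ b ∈ B, b < t → b ≤ s := fun b hb hbt =>
    le_csSup ⟨t, hub⟩ ⟨hb, hbt⟩
  have hScard : scard (T ∩ Set.Ioi s) = Cardinal.lift.{1,0} ν := by
    apply le_antisymm
    · exact (Cardinal.mk_le_mk_of_subset Set.inter_subset_left).trans hTcard
    · by_contra hc
      push_neg at hc
      have hsplit : (T ∩ Set.Iio t) ⊆ (T ∩ Set.Iic s) ∪ (T ∩ Set.Ioi s) := by
        rintro x ⟨hxT, _⟩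
        rcases le_or_gt x s with h' | h'
        · exact Set.mem_union_left _ ⟨hxT, h'⟩
        · exact Set.mem_union_right _ ⟨hxT, h'⟩
      have h1 : Cardinal.lift.{1,0} ν ≤ scard (T ∩ Set.Iic s) + scard (T ∩ Set.Ioi s) :=
        hDcard ▸ (Cardinal.mk_le_mk_of_subset hsplit).trans (Cardinal.mk_union_le _ _)
      have h2 : scard (T ∩ Set.Iic s) + scard (T ∩ Set.Ioi s) < Cardinal.lift.{1,0} ν :=
        Cardinal.add_lt_of_lt haleph (hsmall s hslt) hc
      exact absurd (h1.trans_lt h2) (lt_irrefl _)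
  exact ⟨t, s, htT, hslt, hmax, hBs, hScard⟩

/-- Avoidance of countable products: if  is
countable for each  and  is normal, then some  in  satisfies
 for all . -/
theorem stmt_8 (μ : Cardinal.{0}) (hinf : Cardinal.aleph0 < μ)
    (hcof : μ.ord.cof = Cardinal.aleph0)
    (μseq : ℕ → Cardinal.{0}) (hseq : GoodSeq μ μseq)
    (hunc : ∀ n, Cardinal.aleph0 < μseq n)
    (A : ℕ → Set Ordinal.{0})
    (hA : ∀ n, A n ⊆ interval μseq n ∧ (A n).Countable)
    (q : Set Ordinal.{0}) (hq : InQ μ q) (hn : IsNormalCond μseq q) :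
    ∃ q' : Set Ordinal.{0}, InQ μ q' ∧ condLe μ q' q ∧
      ∀ n ∈ aSet μseq q', A n ∩ Set.Ioo (chiM μseq q' n) (chiP μseq q' n) = ∅ := by
  obtain ⟨⟨hqsub, hqcard⟩, hqC⟩ := hq
  obtain ⟨hmono, hreg, hsup⟩ := hseq
  obtain ⟨m, hmmono, hmrange, hotp⟩ := hn
  have hbdd : BddAbove q := ⟨μ.ord, fun x hx => le_of_lt (hqsub hx)⟩
  have hordpos : ∀ k, (0:Ordinal) < (μseq k).ord := fun k =>
    (Cardinal.isSuccLimit_ord (hreg k).1).pos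
  have hotp' : ∀ n, otp (q ∩ Set.Ico ((μseq (m n)).ord) ((μseq (m n + 1)).ord))
      = Ordinal.lift.{1,0} ((μseq n).ord + 1) := fun n => hotp n
  have hblock := fun n => block_lemma hbdd hqC (hreg n) (hunc n) (hordpos (m n))
    (hotp' n) (A (m n)) (hA (m n)).2
  choose t s htT hst hmax hBs hScard using hblock
  set S : ℕ → Set Ordinal.{0} :=
    fun n => q ∩ interval μseq (m n) ∩ Set.Ioi (s n) with hSdef
  set q' : Set Ordinal.{0} := ⋃ n, S n with hq'def
  have hS_sub_q : ∀ n, S n ⊆ q := fun n x hx => hx.1.1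
  have hq'q : q' ⊆ q := Set.iUnion_subset hS_sub_q
  have htS : ∀ n, t n ∈ S n := fun n => ⟨htT n, Set.mem_Ioi.mpr (hst n)⟩
  have hq'ne : q'.Nonempty := ⟨t 0, Set.mem_iUnion.mpr ⟨0, htS 0⟩⟩
  have hq'sub : q' ⊆ Set.Iio μ.ord := fun x hx => hqsub (hq'q hx)
  have hq'bdd : BddAbove q' := ⟨μ.ord, fun x hx => le_of_lt (hq'sub hx)⟩
  have hordmono : StrictMono (fun k => (μseq k).ord) :=
    fun a b hab => Cardinal.ord_lt_ord.mpr (hmono hab)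
  have hordmono' : Monotone (fun k => (μseq k).ord) := hordmono.monotone
  have hdisj : ∀ {x : Ordinal} {k j : ℕ},
      x ∈ interval μseq k → x ∈ interval μseq j → k = j := by
    intro x k j hk hj
    rcases lt_trichotomy k j with h' | h' | h'
    · exact absurd (lt_of_lt_of_le hk.2 (hordmono' (Nat.succ_le_of_lt h')))
        (not_lt.mpr hj.1)
    · exact h'
    · exact absurd (lt_of_lt_of_le hj.2 (hordmono' (Nat.succ_le_of_lt h')))
        (not_lt.mpr hk.1)
  have hblockeq : ∀ n, q' ∩ interval μseq (m n) = S n := by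
    intro n
    apply subset_antisymm
    · rintro x ⟨hx, hxi⟩
      obtain ⟨j, hj⟩ := Set.mem_iUnion.mp hx
      have hjn : j = n := hmmono.injective (hdisj hj.1.2 hxi)
      exact hjn ▸ hj
    · intro x hx
      exact ⟨Set.mem_iUnion.mpr ⟨n, hx⟩, hx.1.2⟩
  have haq' : aSet μseq q' = Set.range m := by
    ext k
    constructor
    · rintro ⟨x, hxq', hxk⟩
      obtain ⟨j, hj⟩ := Set.mem_iUnion.mp hxq'
      exact ⟨j, hdisj hj.1.2 hxk⟩
    · rintro ⟨j, rfl⟩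
      exact ⟨t j, Set.mem_iUnion.mpr ⟨j, htS j⟩, (htT j).2⟩
  have hcard : scard q' = Cardinal.lift.{1,0} μ := by
    apply le_antisymm
    · exact le_trans (Cardinal.mk_le_mk_of_subset hq'q) (le_of_eq hqcard)
    · have h1 : ∀ n, Cardinal.lift.{1,0} (μseq n) ≤ scard q' := by
        intro n
        have h2 : scard (S n) = Cardinal.lift.{1,0} (μseq n) := hScard n
        exact h2 ▸ Cardinal.mk_le_mk_of_subset (Set.subset_iUnion S n)
      rw [hsup, Cardinal.lift_iSup (Cardinal.bddAbove_range _)]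
      exact ciSup_le h1
  have hclosed : IsClosedCond q' := by
    rintro α ⟨⟨hne, hsupα⟩, hαlt⟩
    obtain ⟨z, hzq', hαz⟩ := exists_lt_of_lt_csSup hq'ne hαlt
    obtain ⟨j₀, hzS⟩ := Set.mem_iUnion.mp hzq'
    obtain ⟨x₁, hx₁⟩ := hne
    obtain ⟨n₁, hn₁⟩ := Set.mem_iUnion.mp hx₁.1
    set N := {n : ℕ | (S n ∩ Set.Iio α).Nonempty} with hNdef
    have hn₁N : n₁ ∈ N := ⟨x₁, hn₁, hx₁.2⟩
    have hNbd : ∀ n ∈ N, n ≤ j₀ := by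
      rintro n ⟨y, hyS, hyα⟩
      by_contra hc
      push_neg at hc
      have h1 : (μseq (m j₀ + 1)).ord ≤ (μseq (m n)).ord :=
        hordmono' (Nat.succ_le_of_lt (hmmono hc))
      have h2 : (μseq (m n)).ord ≤ y := hyS.1.2.1
      have h3 : z < (μseq (m j₀ + 1)).ord := hzS.1.2.2
      exact absurd (hyα.trans hαz) (not_lt.mpr ((le_of_lt h3).trans (h1.trans h2)))
    have hNbdd : BddAbove N := ⟨j₀, hNbd⟩
    set n₀ := sSup N with hn₀def
    have hn₀N : n₀ ∈ N := Nat.sSup_mem ⟨n₁, hn₁N⟩ hNbdd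
    obtain ⟨y₀, hy₀S, hy₀α⟩ := hn₀N
    have hβbdd : BddAbove (S n₀ ∩ Set.Iio α) := ⟨α, fun x hx => le_of_lt hx.2⟩
    set β := sSup (S n₀ ∩ Set.Iio α) with hβdef
    have hub : ∀ x ∈ q' ∩ Set.Iio α, x ≤ β := by
      rintro x ⟨hxq', hxα⟩
      obtain ⟨n, hnS⟩ := Set.mem_iUnion.mp hxq'
      have hnN : n ∈ N := ⟨x, hnS, hxα⟩
      rcases lt_or_eq_of_le (le_csSup hNbdd hnN) with h' | h'
      · have h1 : x < (μseq (m n + 1)).ord := hnS.1.2.2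
        have h2 : (μseq (m n + 1)).ord ≤ (μseq (m n₀)).ord :=
          hordmono' (Nat.succ_le_of_lt (hmmono h'))
        have h3 : (μseq (m n₀)).ord ≤ y₀ := hy₀S.1.2.1
        exact le_of_lt (lt_of_lt_of_le h1
          (h2.trans (h3.trans (le_csSup hβbdd ⟨hy₀S, hy₀α⟩))))
      · have hxS : x ∈ S n₀ := by rw [hn₀def, ← h']; exact hnS
        exact le_csSup hβbdd ⟨hxS, hxα⟩
    have hαle : α ≤ β := le_of_eq_of_le hsupα (csSup_le ⟨x₁, hx₁⟩ hub)
    have hβα : β ≤ α := csSup_le ⟨y₀, hy₀S, hy₀α⟩ (fun x hx => le_of_lt hx.2)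
    have hacc : α ∈ accSet q := by
      refine ⟨⟨y₀, hy₀S.1.1, hy₀α⟩, le_antisymm ?_ ?_⟩
      · calc α ≤ β := hαle
          _ ≤ sSup (q ∩ Set.Iio α) := csSup_le ⟨y₀, hy₀S, hy₀α⟩
              (fun x hx => le_csSup ⟨α, fun w hw => le_of_lt hw.2⟩ ⟨hx.1.1.1, hx.2⟩)
      · exact csSup_le ⟨y₀, hy₀S.1.1, hy₀α⟩ (fun x hx => le_of_lt hx.2)
    have hαq : α ∈ q := hqC ⟨hacc, lt_of_lt_of_le hαlt (csSup_le_csSup hbdd hq'ne hq'q)⟩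
    have hβt : β ≤ t n₀ := csSup_le ⟨y₀, hy₀S, hy₀α⟩ (fun x hx => hmax n₀ x hx.1.1)
    have hαt : α ≤ t n₀ := hαle.trans hβt
    have hαint : α ∈ interval μseq (m n₀) :=
      ⟨le_of_lt (lt_of_le_of_lt hy₀S.1.2.1 hy₀α), lt_of_le_of_lt hαt (htT n₀).2.2⟩
    have hαIoi : s n₀ < α := lt_trans hy₀S.2 hy₀α
    exact Set.mem_iUnion.mpr ⟨n₀, ⟨⟨hαq, hαint⟩, hαIoi⟩⟩
  have hle : condLe μ q' q := by
    unfold condLe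
    rw [Set.diff_eq_empty.mpr hq'q]
    show scard ∅ < _
    unfold scard
    rw [Cardinal.mk_emptyCollection]
    have hne0 : (0:Cardinal.{1}) ≠ Cardinal.lift.{1,0} μ := fun hcon =>
      ne_of_lt (Cardinal.aleph0_pos.trans hinf) (Cardinal.lift_eq_zero.mp hcon.symm).symm
    exact lt_of_le_of_ne zero_le hne0
  refine ⟨q', ⟨⟨hq'sub, hcard⟩, hclosed⟩, hle, ?_⟩
  intro n hn'
  rw [haq'] at hn'
  obtain ⟨j, rfl⟩ := hn'
  have hchiP : chiP μseq q' (m j) = t j := by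
    unfold chiP
    rw [hblockeq j]
    apply le_antisymm
    · exact csSup_le ⟨t j, htS j⟩ (fun x hx => hmax j x hx.1)
    · exact le_csSup ⟨t j, fun x hx => hmax j x hx.1⟩ (htS j)
  have hchiM_mem : chiM μseq q' (m j) ∈ S j := by
    unfold chiM
    rw [hblockeq j]
    exact csInf_mem ⟨t j, htS j⟩
  apply Set.eq_empty_iff_forall_notMem.mpr
  rintro a ⟨haA, hal, hau⟩
  have h1 : a ≤ s j := hBs j a haA (hchiP ▸ hau)
  have h2 : s j < chiM μseq q' (m j) := hchiM_mem.2
  exact absurd (lt_trans hal (lt_of_le_of_lt h1 h2)) (lt_irrefl _)
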